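/- Under the threshold allocation with prices P_j(t) = Σ_{i=j}^{N}(r_i^{1/η} − r_{i+1}^{1/η})·y_i^{1/η}(t), an application with true type x ∈ [y_j(t), y_{j−1}(t)) weakly prefers its assigned VMI j to any other VMI k that a misreport could obtain: (x·r_j)^{1/η} − P_j(t) ≥ (x·r_k)^{1/η} − P_k(t) for all k ∈ {1, …, N} with x ≥ y_k(t) or k > j. -/

import Mathlib

theorem incentive_compatibility (N : ℕ) (hN : 1 ≤ N) (η : ℝ) (hη : 1 ≤ η)
    (r y : ℕ → ℝ)
    (hr : ∀ i, 1 ≤ i → i < N → r (i+1) ≤ r i) (hrN : 0 < r N)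
    (hrconv : r (N+1) = 0)
    (hy : ∀ i, 1 ≤ i → i < N → y (i+1) < y i) (hyN : 0 < y N)
    (P : ℕ → ℝ)
    (hP : ∀ j, P j = ∑ i ∈ Finset.Icc j N,
        (r i ^ (1/η) - r (i+1) ^ (1/η)) * y i ^ (1/η))
    (j : ℕ) (hj1 : 1 ≤ j) (hjN : j ≤ N) (x : ℝ)
    (hx : y j ≤ x) (hx' : j = 1 ∨ x < y (j - 1)) :
    ∀ k, 1 ≤ k → k ≤ N → (y k ≤ x ∨ j < k) →
      (x * r k) ^ (1/η) - P k ≤ (x * r j) ^ (1/η) - P j := by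
  have hηpos : (0:ℝ) < η := lt_of_lt_of_le one_pos hη
  have hexp : (0:ℝ) ≤ 1/η := by positivity
  -- monotonicity of r and y on [1, N]
  have hrmono : ∀ a b, 1 ≤ a → a ≤ b → b ≤ N → r b ≤ r a := by
    intro a b ha hab hbN
    induction b with
    | zero => omega
    | succ n ih =>
      rcases Nat.lt_or_ge a (n+1) with h | h
      · have h1 : 1 ≤ n := by omega
        have := hr n h1 (by omega)
        have := ih (by omega) (by omega)
        linarith
      · have : a = n + 1 := by omega
        simp [this]
  have hymono : ∀ a b, 1 ≤ a → a ≤ b → b ≤ N → y b ≤ y a := by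
    intro a b ha hab hbN
    induction b with
    | zero => omega
    | succ n ih =>
      rcases Nat.lt_or_ge a (n+1) with h | h
      · have h1 : 1 ≤ n := by omega
        have := hy n h1 (by omega)
        have := ih (by omega) (by omega)
        linarith
      · have : a = n + 1 := by omega
        simp [this]
  have hrpos : ∀ a, 1 ≤ a → a ≤ N → 0 < r a := fun a ha haN =>
    lt_of_lt_of_le hrN (hrmono a N ha haN le_rfl)
  have hypos : ∀ a, 1 ≤ a → a ≤ N → 0 < y a := fun a ha haN =>
    lt_of_lt_of_le hyN (hymono a N ha haN le_rfl)
  have hxpos : 0 < x := lt_of_lt_of_le (hypos j hj1 hjN) hx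
  intro k hk1 hkN hcase
  rcases lt_trichotomy k j with hlt | heq | hgt
  · -- impossible: k < j forces y k ≤ x but y k ≥ y (j-1) > x
    exfalso
    have hj2 : 2 ≤ j := by omega
    rcases hx' with h1 | h2
    · omega
    · rcases hcase with hyk | hjk
      · have : y (j-1) ≤ y k := hymono k (j-1) hk1 (by omega) (by omega)
        linarith
      · omega
  · subst heq; exact le_rfl
  · -- main case: j < k
    set f : ℕ → ℝ := fun i => r i ^ (1/η) with hf
    have hsplit : P j = (∑ i ∈ Finset.Ico j k, (f i - f (i+1)) * y i ^ (1/η)) + P k := by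
      rw [hP j, hP k]
      rw [← Finset.Ico_add_one_right_eq_Icc, ← Finset.Ico_add_one_right_eq_Icc]
      rw [← Finset.sum_Ico_consecutive _ (le_of_lt hgt) (by omega)]
    have htel : (∑ i ∈ Finset.Ico j k, (f i - f (i+1))) = f j - f k := by
      clear hcase hkN hk1 hsplit
      induction k with
      | zero => omega
      | succ n ih =>
        rcases Nat.lt_or_ge j n with h | h
        · rw [Finset.sum_Ico_succ_top (by omega), ih h]; ring
        · have : j = n := by omega
          subst this
          rw [Finset.sum_Ico_succ_top (by omega)]
          simp
    have hterm : ∀ i ∈ Finset.Ico j k,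
        (f i - f (i+1)) * y i ^ (1/η) ≤ (f i - f (i+1)) * x ^ (1/η) := by
      intro i hi
      simp only [Finset.mem_Ico] at hi
      have hi1 : 1 ≤ i := le_trans hj1 hi.1
      have hiN : i < N := lt_of_lt_of_le hi.2 hkN
      have hrle : r (i+1) ≤ r i := hr i hi1 hiN
      have hrip : 0 < r (i+1) := hrpos (i+1) (by omega) (by omega)
      have hfge : f (i+1) ≤ f i :=
        Real.rpow_le_rpow (le_of_lt hrip) hrle hexp
      have hyix : y i ≤ x := le_trans (hymono j i hj1 hi.1 (le_of_lt hiN)) hx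
      have hyip : 0 < y i := hypos i hi1 (le_of_lt hiN)
      have : y i ^ (1/η) ≤ x ^ (1/η) :=
        Real.rpow_le_rpow (le_of_lt hyip) hyix hexp
      exact mul_le_mul_of_nonneg_left this (by linarith)
    have hsum := Finset.sum_le_sum hterm
    rw [← Finset.sum_mul, htel] at hsum
    have hxr : ∀ m, 1 ≤ m → m ≤ N → (x * r m) ^ (1/η) = x ^ (1/η) * f m := by
      intro m hm1 hmN
      exact Real.mul_rpow (le_of_lt hxpos) (le_of_lt (hrpos m hm1 hmN))
    rw [hxr j hj1 hjN, hxr k hk1 hkN, hsplit]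
    nlinarith [hsum]
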